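/- Let E be a nonzero real locally convex Hausdorff topological vector space such that (E, σ(E,E′)) is a σ-space (i.e., (E, σ(E,E′)) has a σ-locally finite network). Then: (i) there exists an injective continuous linear map from (E, σ(E,E′)) into ℝ^ℕ; (ii) (E, σ(E,E′)) has countable pseudocharacter and the cardinality of E equals the continuum 2^{ℵ₀}; (iii) the topological dual E′ endowed with the weak* topology σ(E′,E) is separable. -/

import Mathlib

open TopologicalSpace Filter Set

/-- A family `N` of subsets of a topological space `X` is a *k-network* if whenever `K ⊆ U`
with `K` compact and `U` open, there is a finite subfamily `F ⊆ N` with `K ⊆ ⋃₀ F ⊆ U`. -/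
def IsKNetwork {X : Type*} [TopologicalSpace X] (N : Set (Set X)) : Prop :=
  ∀ K U : Set X, IsCompact K → IsOpen U → K ⊆ U →
    ∃ F : Set (Set X), F ⊆ N ∧ F.Finite ∧ K ⊆ ⋃₀ F ∧ ⋃₀ F ⊆ U

/-- A family `N` of subsets of `X` is a *network* if for every `x` and every open `U ∋ x`
there is `A ∈ N` with `x ∈ A ⊆ U`. -/
def IsNetwork {X : Type*} [TopologicalSpace X] (N : Set (Set X)) : Prop :=
  ∀ (x : X) (U : Set X), IsOpen U → x ∈ U → ∃ A ∈ N, x ∈ A ∧ A ⊆ U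

/-- A family of subsets is *locally finite* if every point has a neighbourhood meeting
only finitely many of its members. -/
def IsLocallyFiniteFamily {X : Type*} [TopologicalSpace X] (N : Set (Set X)) : Prop :=
  ∀ x : X, ∃ V ∈ nhds x, {A ∈ N | (A ∩ V).Nonempty}.Finite

/-- A family of subsets is *σ-locally finite* if it is a countable union of locally finite
families. -/
def IsSigmaLocallyFinite {X : Type*} [TopologicalSpace X] (N : Set (Set X)) : Prop :=
  ∃ f : ℕ → Set (Set X), (∀ n, IsLocallyFiniteFamily (f n)) ∧ N = ⋃ n, f n

/-- An *ℵ-space* is a regular Hausdorff space with a σ-locally finite k-network. -/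
def IsAlephSpace (X : Type*) [TopologicalSpace X] : Prop :=
  RegularSpace X ∧ T2Space X ∧ ∃ N : Set (Set X), IsSigmaLocallyFinite N ∧ IsKNetwork N

/-- An *ℵ₀-space* is a regular Hausdorff space with a countable k-network. -/
def IsAleph0Space (X : Type*) [TopologicalSpace X] : Prop :=
  RegularSpace X ∧ T2Space X ∧ ∃ N : Set (Set X), N.Countable ∧ IsKNetwork N

/-- In a T1 regular space with a σ-locally finite network, every point is the intersection of
countably many open sets. -/
lemma exists_open_inter_singleton_of_sigmaLocallyFinite_network
    {X : Type*} [TopologicalSpace X] [T1Space X] [RegularSpace X]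
    {N : Set (Set X)} (hN : IsNetwork N) {f : ℕ → Set (Set X)}
    (hlf : ∀ n, IsLocallyFiniteFamily (f n)) (hNf : N = ⋃ n, f n) (x₀ : X) :
    ∃ G : ℕ → Set X, (∀ n, IsOpen (G n)) ∧ (⋂ n, G n) = {x₀} := by
  classical
  set F : ∀ n : ℕ, {A // A ∈ f n} → Set X := fun n i =>
    if x₀ ∈ closure i.1 then ∅ else closure i.1 with hF
  have hlfF : ∀ n, LocallyFinite (F n) := by
    intro n x
    obtain ⟨V, hV, hfin⟩ := hlf n x
    obtain ⟨O, hOV, hO, hxO⟩ := mem_nhds_iff.mp hV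
    refine ⟨O, hO.mem_nhds hxO, ?_⟩
    have hsub : {i : {A // A ∈ f n} | (F n i ∩ O).Nonempty} ⊆
        Subtype.val ⁻¹' {A | A ∈ f n ∧ (A ∩ V).Nonempty} := by
      rintro ⟨A, hA⟩ ⟨y, hy1, hy2⟩
      simp only [hF] at hy1
      split_ifs at hy1 with h
      · exact absurd hy1 (Set.notMem_empty y)
      · obtain ⟨z, hz1, hz2⟩ := mem_closure_iff.mp hy1 O hO hy2
        exact ⟨hA, z, hz2, hOV hz1⟩
    exact ((hfin.preimage Subtype.val_injective.injOn).subset hsub)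
  have hclosed : ∀ n, IsClosed (⋃ i, F n i) := fun n =>
    (hlfF n).isClosed_iUnion fun i => by
      simp only [hF]; split_ifs; exacts [isClosed_empty, isClosed_closure]
  refine ⟨fun n => (⋃ i, F n i)ᶜ, fun n => (hclosed n).isOpen_compl, ?_⟩
  ext x
  simp only [Set.mem_iInter, Set.mem_singleton_iff, Set.mem_compl_iff]
  constructor
  · intro hx
    by_contra hne
    have h1 : ({x₀}ᶜ : Set X) ∈ nhds x :=
      isOpen_compl_singleton.mem_nhds (by simpa using hne)
    obtain ⟨t, ht, htc, hts⟩ := exists_mem_nhds_isClosed_subset h1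
    obtain ⟨A, hAN, hxA, hAt⟩ :=
      hN x (interior t) isOpen_interior (mem_interior_iff_mem_nhds.mpr ht)
    rw [hNf] at hAN
    obtain ⟨n, hn⟩ := Set.mem_iUnion.mp hAN
    have hclA : closure A ⊆ t := closure_minimal (hAt.trans interior_subset) htc
    have hx0A : x₀ ∉ closure A := fun h => (hts (hclA h)) rfl
    refine hx n (Set.mem_iUnion.mpr ⟨⟨A, hn⟩, ?_⟩)
    simp only [hF, if_neg hx0A]
    exact subset_closure hxA
  · rintro rfl n hx
    obtain ⟨i, hi⟩ := Set.mem_iUnion.mp hx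
    simp only [hF] at hi
    split_ifs at hi with h
    · exact hi
    · exact h hi

/-- If a nonzero Hausdorff locally convex space `E` is a σ-space in its weak topology
(i.e. `(E, σ(E,E'))` has a σ-locally finite network), then: (i) there is an injective
continuous linear map from `(E, σ(E,E'))` into `ℝ^ℕ`; (ii) `(E, σ(E,E'))` has countable
pseudocharacter and `|E| = 𝔠`; (iii) the weak* dual `(E', σ(E',E))` is separable. -/
theorem weak_sigmaSpace_necessary_conditions
    (E : Type) [AddCommGroup E] [Module ℝ E] [TopologicalSpace E]
    [IsTopologicalAddGroup E] [ContinuousSMul ℝ E] [LocallyConvexSpace ℝ E] [T2Space E]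
    (hE : ∃ x : E, x ≠ 0)
    (hσ : ∃ N : Set (Set (WeakSpace ℝ E)), IsSigmaLocallyFinite N ∧ IsNetwork N) :
    (∃ f : WeakSpace ℝ E →L[ℝ] (ℕ → ℝ), Function.Injective f) ∧
    (∃ 𝒰 : Set (Set (WeakSpace ℝ E)), 𝒰.Countable ∧ (∀ U ∈ 𝒰, IsOpen U) ∧
        ⋂₀ 𝒰 = {(0 : WeakSpace ℝ E)}) ∧
    Cardinal.mk E = Cardinal.continuum ∧
    TopologicalSpace.SeparableSpace (WeakDual ℝ E) := by
  classical
  obtain ⟨N, ⟨f, hlf, hNf⟩, hnet⟩ := hσ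
  have hsep : SeparatingDual ℝ E := inferInstance
  have hBinj : Function.Injective ((topDualPairing ℝ E).flip) :=
    separatingDual_iff_injective.mp hsep
  have hemb : Topology.IsEmbedding
      fun (x : WeakSpace ℝ E) (y : E →L[ℝ] ℝ) => (topDualPairing ℝ E).flip x y :=
    WeakBilin.isEmbedding hBinj
  haveI : T2Space (WeakSpace ℝ E) := hemb.t2Space
  obtain ⟨G, hGopen, hGinter⟩ :=
    exists_open_inter_singleton_of_sigmaLocallyFinite_network hnet hlf hNf
      (0 : WeakSpace ℝ E)
  have h0G : ∀ n, (0 : WeakSpace ℝ E) ∈ G n := by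
    intro n
    have : (0 : WeakSpace ℝ E) ∈ ⋂ n, G n := by rw [hGinter]; rfl
    exact Set.mem_iInter.mp this n
  -- extract finitely many functionals for each `G n`
  have key : ∀ n, ∃ s : Finset (E →L[ℝ] ℝ),
      ∀ x : WeakSpace ℝ E, (∀ φ ∈ s, φ x = 0) → x ∈ G n := by
    intro n
    obtain ⟨W, hW, hWG⟩ := hemb.toIsInducing.isOpen_iff.mp (hGopen n)
    have h0W : (fun y : E →L[ℝ] ℝ => (topDualPairing ℝ E).flip (0 : WeakSpace ℝ E) y) ∈ W := by
      have h0n := h0G n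
      rw [← hWG] at h0n
      exact h0n
    obtain ⟨I, u, hu, hIW⟩ := (isOpen_pi_iff.mp hW) _ h0W
    refine ⟨I, fun x hx => ?_⟩
    have hmem : (fun y : E →L[ℝ] ℝ => (topDualPairing ℝ E).flip x y) ∈ (I : Set _).pi u := by
      intro φ hφ
      have ex : (topDualPairing ℝ E).flip x φ = 0 := hx φ hφ
      have e0 : (topDualPairing ℝ E).flip (0 : WeakSpace ℝ E) φ = 0 := by
        exact map_zero φ
      have := (hu φ hφ).2
      simpa only [ex, e0] using this
    rw [← hWG]
    exact hIW hmem
  choose s hs using key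
  set D : Set (E →L[ℝ] ℝ) := insert 0 (⋃ n, (s n : Set (E →L[ℝ] ℝ))) with hD
  have hDc : D.Countable :=
    (Set.countable_iUnion fun n => (s n).countable_toSet).insert 0
  obtain ⟨g, hg⟩ := hDc.exists_eq_range ⟨0, Set.mem_insert _ _⟩
  -- the countable family `g` separates points
  have hsepg : ∀ x : WeakSpace ℝ E, (∀ n, g n x = 0) → x = 0 := by
    intro x hx
    have hxG : x ∈ ⋂ n, G n := by
      refine Set.mem_iInter.mpr fun n => hs n x fun φ hφ => ?_
      have hmem : φ ∈ D := Set.mem_insert_of_mem _ (Set.mem_iUnion.mpr ⟨n, hφ⟩)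
      rw [hg] at hmem
      obtain ⟨m, rfl⟩ := hmem
      exact hx m
    rw [hGinter] at hxG
    exact hxG
  -- the injective continuous linear map into ℝ^ℕ
  have hFcont : Continuous fun (x : WeakSpace ℝ E) (n : ℕ) => g n x :=
    continuous_pi fun n => WeakBilin.eval_continuous ((topDualPairing ℝ E).flip) (g n)
  let F : WeakSpace ℝ E →L[ℝ] (ℕ → ℝ) :=
    { toFun := fun x n => g n x
      map_add' := fun x y => by funext n; exact map_add (g n) x y
      map_smul' := fun c x => by funext n; exact map_smul (g n) c x
      cont := hFcont }
  have hFinj : Function.Injective F := by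
    intro x y hxy
    have hsub : x - y = 0 := by
      refine hsepg _ fun n => ?_
      have hn : g n x = g n y := congrFun hxy n
      show g n (x - y) = 0
      have h2 : g n ((x : E) - (y : E)) = g n x - g n y := map_sub (g n) _ _
      exact h2.trans (by rw [hn, sub_self])
    exact sub_eq_zero.mp hsub
  obtain ⟨x₀, hx₀⟩ := hE
  refine ⟨⟨F, hFinj⟩, ⟨Set.range G, Set.countable_range G, ?_, ?_⟩, ?_, ?_⟩
  · rintro U ⟨n, rfl⟩; exact hGopen n
  · rw [Set.sInter_range]; exact hGinter
  · -- cardinality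
    have h1 : Cardinal.mk E ≤ Cardinal.mk (ℕ → ℝ) :=
      Cardinal.mk_le_of_injective hFinj
    have h2 : Cardinal.mk (ℕ → ℝ) = Cardinal.continuum := by
      rw [← Cardinal.power_def ℝ ℕ, Cardinal.mk_real, Cardinal.mk_nat,
        Cardinal.continuum_power_aleph0]
    have h3 : Cardinal.continuum ≤ Cardinal.mk E := by
      rw [← Cardinal.mk_real]
      exact Cardinal.mk_le_of_injective (smul_left_injective ℝ hx₀)
    exact le_antisymm (h1.trans_eq h2) h3
  · -- separability of the weak* dual
    let g' : ℕ → WeakDual ℝ E := g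
    set T : Set (WeakDual ℝ E) := ↑(Submodule.span ℝ (Set.range g')) with hT
    have hdense : Dense T := by
      rw [dense_iff_inter_open]
      rintro U hU ⟨φ, hφU⟩
      have hIndD : Topology.IsInducing fun (ψ : WeakDual ℝ E) (x : E) =>
          topDualPairing ℝ E ψ x := ⟨rfl⟩
      obtain ⟨W, hW, hWU⟩ := hIndD.isOpen_iff.mp hU
      rw [← hWU] at hφU
      obtain ⟨I, u, hu, hIW⟩ := (isOpen_pi_iff.mp hW) _ hφU
      -- interpolate on the span of `I`
      set V : Submodule ℝ E := Submodule.span ℝ (I : Set E) with hV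
      haveI : FiniteDimensional ℝ V := FiniteDimensional.span_finset ℝ I
      let Rr : WeakDual ℝ E →ₗ[ℝ] Module.Dual ℝ V :=
        (LinearMap.domRestrict' V).comp (ContinuousLinearMap.coeLM ℝ)
      have hRr : ∀ (ψ : WeakDual ℝ E) (v : V), Rr ψ v = ψ (v : E) := fun _ _ => rfl
      have htop : Submodule.span ℝ (Set.range fun n => Rr (g' n)) = ⊤ := by
        apply Submodule.span_eq_top_of_ne_zero
        intro z hz
        by_contra hcon
        push_neg at hcon
        apply hz
        have hz0 : ((z : E) : WeakSpace ℝ E) = 0 := by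
          refine hsepg _ fun n => ?_
          have := hcon _ ⟨n, rfl⟩
          rw [hRr] at this
          exact this
        exact Subtype.ext hz0
      have hφmem : Rr φ ∈ Submodule.map Rr (Submodule.span ℝ (Set.range g')) := by
        rw [Submodule.map_span, ← Set.range_comp]
        have : (Set.range (Rr ∘ g')) = Set.range fun n => Rr (g' n) := rfl
        rw [this, htop]
        exact Submodule.mem_top
      obtain ⟨ψ, hψspan, hψeq⟩ := hφmem
      have hψφ : ∀ x ∈ V, ψ x = φ x := by
        intro x hx
        have := congrArg (fun h : Module.Dual ℝ V => h ⟨x, hx⟩) hψeq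
        simpa [hRr] using this
      refine ⟨ψ, ?_, hψspan⟩
      rw [← hWU]
      apply hIW
      intro a ha
      have hφa := (hu a ha).2
      have heq : ψ a = φ a := hψφ a (Submodule.subset_span ha)
      show ψ a ∈ u a
      rw [heq]
      exact hφa
    have hTsep : IsSeparable T := (Set.countable_range g').isSeparable.span
    obtain ⟨c, hc, hTc⟩ := hTsep
    have hTc' : closure T ⊆ closure c := by
      rw [show closure c = closure (closure c) from (closure_closure).symm]
      exact closure_mono hTc
    exact ⟨⟨c, hc, fun x => hTc' (hdense x)⟩⟩
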